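/- Let R be a commutative noetherian ring and I, J ideals of R. If E is an injective R-module, then the (I,J)-torsion submodule Γ_{I,J}(E) is an injective R-module. -/

import Mathlib

open CategoryTheory

section GammaDefs

variable {R : Type} [CommRing R]

lemma gammaIJ_aux {M : Type} [AddCommGroup M] [Module R M] (I J : Ideal R) (x : M) (n : ℕ) :
    (∀ a ∈ I ^ n, ∃ j ∈ J, a • x = j • x) ↔ I ^ n ≤ Ideal.torsionOf R M x ⊔ J := by
  constructor
  · intro h a ha
    obtain ⟨j, hj, hja⟩ := h a ha
    exact Submodule.mem_sup.2 ⟨a - j, by simp [Ideal.mem_torsionOf_iff, sub_smul, hja],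
      j, hj, by ring⟩
  · intro h a ha
    obtain ⟨s, hs, j, hj, hsj⟩ := Submodule.mem_sup.1 (h ha)
    refine ⟨j, hj, ?_⟩
    rw [← hsj, add_smul, (Ideal.mem_torsionOf_iff _ _).1 hs, zero_add]

/-- The `(I,J)`-torsion submodule: elements `x` such that `I^n x ⊆ J x` for some `n > 0`. -/
def gammaIJ (I J : Ideal R) (M : Type) [AddCommGroup M] [Module R M] : Submodule R M where
  carrier := {x | ∃ n : ℕ, 0 < n ∧ ∀ a ∈ I ^ n, ∃ j ∈ J, a • x = j • x}
  zero_mem' := ⟨1, one_pos, fun a _ => ⟨0, J.zero_mem, by simp⟩⟩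
  add_mem' := by
    rintro x y ⟨n, hn, hx⟩ ⟨m, hm, hy⟩
    refine ⟨n + m, by omega, (gammaIJ_aux I J _ _).2 ?_⟩
    rw [pow_add]
    refine le_trans (Ideal.mul_mono ((gammaIJ_aux I J _ _).1 hx) ((gammaIJ_aux I J _ _).1 hy))
      (Ideal.mul_le.2 ?_)
    rintro a ha b hb
    obtain ⟨s, hs, j, hj, rfl⟩ := Submodule.mem_sup.1 ha
    obtain ⟨t, ht, j', hj', rfl⟩ := Submodule.mem_sup.1 hb
    rw [Ideal.mem_torsionOf_iff] at hs ht
    refine Submodule.mem_sup.2 ⟨s * t, ?_, s * j' + j * t + j * j',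
      J.add_mem (J.add_mem (J.mul_mem_left s hj') (J.mul_mem_right t hj)) (J.mul_mem_left j hj'),
      by ring⟩
    have h1 : (s * t) • x = 0 := by rw [mul_comm, mul_smul, hs, smul_zero]
    have h2 : (s * t) • y = 0 := by rw [mul_smul, ht, smul_zero]
    rw [Ideal.mem_torsionOf_iff, smul_add, h1, h2, add_zero]
  smul_mem' := by
    rintro r x ⟨n, hn, hx⟩
    refine ⟨n, hn, fun a ha => ?_⟩
    obtain ⟨j, hj, hja⟩ := hx a ha
    exact ⟨j, hj, by rw [smul_comm, hja, smul_comm]⟩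

/-- The `I`-torsion submodule: elements killed by a power of `I`. -/
def gammaI (I : Ideal R) (M : Type) [AddCommGroup M] [Module R M] : Submodule R M where
  carrier := {x | ∃ n : ℕ, 0 < n ∧ ∀ a ∈ I ^ n, a • x = 0}
  zero_mem' := ⟨1, one_pos, fun a _ => smul_zero a⟩
  add_mem' := by
    rintro x y ⟨n, hn, hx⟩ ⟨m, hm, hy⟩
    refine ⟨n + m, by omega, fun a ha => ?_⟩
    rw [smul_add, hx a (Ideal.pow_le_pow_right (by omega) ha),
      hy a (Ideal.pow_le_pow_right (by omega) ha), add_zero]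
  smul_mem' := by
    rintro r x ⟨n, hn, hx⟩
    exact ⟨n, hn, fun a ha => by rw [smul_comm, hx a ha, smul_zero]⟩

end GammaDefs



section Aux

variable {R : Type} [CommRing R]

lemma pow_le_mul_sup (I J A B : Ideal R) {n m : ℕ}
    (hA : I ^ n ≤ A ⊔ J) (hB : I ^ m ≤ B ⊔ J) : I ^ (n + m) ≤ A * B ⊔ J := by
  rw [pow_add]
  refine le_trans (Ideal.mul_mono hA hB) (Ideal.mul_le.2 ?_)
  rintro r hr s hs
  obtain ⟨x, hx, j, hj, rfl⟩ := Submodule.mem_sup.1 hr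
  obtain ⟨y, hy, j', hj', rfl⟩ := Submodule.mem_sup.1 hs
  refine Submodule.mem_sup.2 ⟨x * y, Ideal.mul_mem_mul hx hy, x * j' + j * y + j * j',
    J.add_mem (J.add_mem (J.mul_mem_left x hj') (J.mul_mem_right y hj)) (J.mul_mem_left j hj'),
    by ring⟩

lemma pow_le_pow_sup (I J K : Ideal R) {n : ℕ} (h : I ^ n ≤ K ⊔ J) :
    ∀ m : ℕ, 0 < m → I ^ (n * m) ≤ K ^ m ⊔ J := by
  intro m
  induction m with
  | zero => omega
  | succ m ih =>
    intro _
    rcases Nat.eq_zero_or_pos m with hm | hm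
    · subst hm; simpa using h
    · have := pow_le_mul_sup I J (K ^ m) K (ih hm) h
      rw [← pow_succ] at this
      simpa [Nat.mul_succ] using this

lemma finset_inf_torsion {E : Type} [AddCommGroup E] [Module R E]
    (I J : Ideal R) (s : Finset E) (hs : ∀ x ∈ s, x ∈ gammaIJ I J E) :
    ∃ n : ℕ, 0 < n ∧ I ^ n ≤ s.inf (fun x => Ideal.torsionOf R E x) ⊔ J := by
  classical
  revert hs
  induction s using Finset.induction_on with
  | empty => exact fun _ => ⟨1, one_pos, by simp⟩
  | @insert x s hxs ih =>
    intro hs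
    obtain ⟨n, hn, hKn⟩ := ih fun y hy => hs y (Finset.mem_insert_of_mem hy)
    obtain ⟨m, hm, hxm⟩ := hs x (Finset.mem_insert_self _ _)
    have hxt : I ^ m ≤ Ideal.torsionOf R E x ⊔ J := (gammaIJ_aux I J x m).1 hxm
    refine ⟨m + n, by omega, ?_⟩
    rw [Finset.inf_insert]
    exact le_trans (pow_le_mul_sup I J _ _ hxt hKn)
      (sup_le_sup_right Ideal.mul_le_inf _)

end Aux

/-- Lemma 2.5: if `E` is an injective `R`-module then so is `Γ_{I,J}(E)`. -/
theorem gammaIJ_injective (R : Type) [CommRing R] [IsNoetherianRing R] (I J : Ideal R)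
    (E : Type) [AddCommGroup E] [Module R E] (hE : Module.Injective R E) :
    Module.Injective R ↥(gammaIJ I J E) := by
  classical
  rw [← Module.Baer.iff_injective]
  intro a f
  set F : ↥a →ₗ[R] E := (gammaIJ I J E).subtype.comp f with hFdef
  have hrange : ∀ y ∈ LinearMap.range F, y ∈ gammaIJ I J E := by
    rintro y ⟨x, rfl⟩
    exact (f x).2
  have hfg : (LinearMap.range F).FG := by
    rw [LinearMap.range_eq_map]
    exact Submodule.FG.map _ (IsNoetherian.noetherian ⊤)
  obtain ⟨s, hs⟩ := hfg
  set K : Ideal R := s.inf (fun x => Ideal.torsionOf R E x) with hKdef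
  have hKkill : ∀ k ∈ K, ∀ y ∈ LinearMap.range F, k • y = 0 := by
    intro k hk y hy
    rw [← hs] at hy
    induction hy using Submodule.span_induction with
    | mem z hz =>
      have hle : s.inf (fun x => Ideal.torsionOf R E x) ≤ Ideal.torsionOf R E z := Finset.inf_le hz
      exact (Ideal.mem_torsionOf_iff _ _).1 (hle hk)
    | zero => simp
    | add _ _ _ _ h1 h2 => rw [smul_add, h1, h2, add_zero]
    | smul r z _ h1 => rw [smul_comm, h1, smul_zero]
  obtain ⟨n, hn, hKJ⟩ := finset_inf_torsion I J s
    (fun x hx => hrange x (hs ▸ Submodule.subset_span hx))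
  -- Artin-Rees
  obtain ⟨c, hc⟩ := Ideal.exists_pow_inf_eq_pow_smul K a
  set K' : Ideal R := K ^ (c + 1) with hK'def
  have hAR : a ⊓ K' ≤ K • a := by
    have h1 := hc (c + 1) (Nat.le_succ c)
    have h2 : (K ^ (c + 1) • ⊤ : Ideal R) = K' := by
      rw [smul_eq_mul, Ideal.mul_top]
    have h3 : c + 1 - c = 1 := by omega
    rw [h2, h3, pow_one] at h1
    rw [inf_comm, h1]
    exact Submodule.smul_mono le_rfl inf_le_right
  have hker : ∀ z : ↥a, (z : R) ∈ K' → F z = 0 := by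
    intro z hz
    have hmem : (z : R) ∈ K • Submodule.map a.subtype (⊤ : Submodule R ↥a) := by
      rw [Submodule.map_top, Submodule.range_subtype]
      exact hAR ⟨z.2, hz⟩
    rw [← Submodule.map_smul''] at hmem
    obtain ⟨w, hw, hwz⟩ := hmem
    have hwz' : w = z := Subtype.ext hwz
    subst hwz'
    refine Submodule.smul_induction_on hw (fun r hr t _ => ?_) (fun x y h1 h2 => ?_)
    · rw [map_smul]
      exact hKkill r hr (F t) ⟨t, rfl⟩
    · rw [map_add, h1, h2, add_zero]
  -- lift along the second isomorphism theorem
  have hFkills : Submodule.comap a.subtype a ⊓ Submodule.comap a.subtype K' ≤ LinearMap.ker F := by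
    intro z hz
    exact hker z hz.2
  set Fbar := Submodule.liftQ _ F hFkills with hFbar
  set eqv := LinearMap.quotientInfEquivSupQuotient a K' with heqv
  set g : ↥(a ⊔ K') →ₗ[R] E :=
    Fbar ∘ₗ (eqv.symm : _ →ₗ[R] _) ∘ₗ (Submodule.comap (a ⊔ K').subtype K').mkQ with hg
  have hg1 : ∀ (x : R) (hx : x ∈ a) (hx' : x ∈ a ⊔ K'), g ⟨x, hx'⟩ = F ⟨x, hx⟩ := by
    intro x hx hx'
    have h1 : eqv.symm (Submodule.Quotient.mk (⟨x, hx'⟩ : ↥(a ⊔ K'))) =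
        Submodule.Quotient.mk ⟨x, hx⟩ :=
      LinearMap.quotientInfEquivSupQuotient_symm_apply_left a K' ⟨x, hx'⟩ hx
    simp only [hg, LinearMap.comp_apply, Submodule.mkQ_apply, LinearEquiv.coe_coe, h1, hFbar,
      Submodule.liftQ_apply]
  have hg2 : ∀ (y : R) (hy : y ∈ K') (hy' : y ∈ a ⊔ K'), g ⟨y, hy'⟩ = 0 := by
    intro y hy hy'
    have h1 : (Submodule.comap (a ⊔ K').subtype K').mkQ (⟨y, hy'⟩ : ↥(a ⊔ K')) = 0 :=
      (Submodule.Quotient.mk_eq_zero _).2 hy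
    simp only [hg, LinearMap.comp_apply, h1, map_zero]
  -- extend using injectivity of E
  obtain ⟨h, hh⟩ := hE.out (a ⊔ K').subtype (a ⊔ K').injective_subtype g
  set e : E := h 1 with he
  have hP : ∀ (z : R) (hz : z ∈ a ⊔ K'), z • e = g ⟨z, hz⟩ := by
    intro z hz
    have : h z = h ((a ⊔ K').subtype ⟨z, hz⟩) := rfl
    calc z • e = h (z • 1) := by rw [map_smul]
    _ = h z := by rw [smul_eq_mul, mul_one]
    _ = g ⟨z, hz⟩ := by rw [this, hh]
  have hea : ∀ (x : R) (hx : x ∈ a), x • e = F ⟨x, hx⟩ := by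
    intro x hx
    rw [hP x ((le_sup_left : a ≤ a ⊔ K') hx), hg1 x hx]
  have heK : ∀ y ∈ K', y • e = 0 := by
    intro y hy
    rw [hP y ((le_sup_right : K' ≤ a ⊔ K') hy), hg2 y hy]
  have heΓ : e ∈ gammaIJ I J E := by
    refine ⟨n * (c + 1), by positivity, (gammaIJ_aux I J e (n * (c + 1))).2 ?_⟩
    refine le_trans (pow_le_pow_sup I J K hKJ (c + 1) (Nat.succ_pos c)) ?_
    refine sup_le_sup_right (fun y hy => ?_) J
    exact (Ideal.mem_torsionOf_iff _ _).2 (heK y hy)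
  refine ⟨LinearMap.toSpanSingleton R ↥(gammaIJ I J E) ⟨e, heΓ⟩, fun x hx => ?_⟩
  apply Subtype.ext
  have h1 : ((LinearMap.toSpanSingleton R ↥(gammaIJ I J E) ⟨e, heΓ⟩ x : ↥(gammaIJ I J E)) : E)
      = x • e := rfl
  rw [h1, hea x hx, hFdef]
  rfl
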